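/- Let ε ∈ (0,1/2) and let D = {x_{i_1 j_1}, …, x_{i_t j_t}} be an admissible set of variables. Then there is at most one univariate polynomial a over F_n of degree < εn satisfying a(i_k) = j_k for all 1 ≤ k ≤ t. If such a polynomial a exists, the partial derivative of NW_{n,ε} with respect to the variables of D equals the multilinear monomial Π_{i ∈ F_n∖{i_1,…,i_t}} x_{i,a(i)}; if no such polynomial exists, this partial derivative is zero. -/

import Mathlib

open MvPolynomial

noncomputable section

/-- Evaluation at `i` of the univariate polynomial with coefficient vector `a`
(vectors `a : Fin d → Fn` encode exactly the univariate polynomials of degree `< d`). -/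
def polyEval {Fn : Type*} [CommRing Fn] {d : ℕ} (a : Fin d → Fn) (i : Fn) : Fn :=
  ∑ k : Fin d, a k * i ^ (k : ℕ)

/-- The Nisan–Wigderson polynomial over the coefficient field `K`, summing over all
univariate polynomials over `Fn` of degree `< d` (encoded by coefficient vectors). -/
def NW (Fn : Type*) [CommRing Fn] [Fintype Fn] (K : Type*) [CommSemiring K] (d : ℕ) :
    MvPolynomial (Fn × Fn) K :=
  ∑ a : Fin d → Fn, ∏ i : Fn, X (i, polyEval a i)

/-- Iterated partial derivative with respect to a finite set of variables. -/
def pderivFinset {σ : Type*} {K : Type*} [CommSemiring K] (D : Finset σ)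
    (f : MvPolynomial σ K) : MvPolynomial σ K :=
  D.toList.foldr (fun v g => pderiv v g) f

-- uniqueness
lemma poly_unique {Fn : Type*} [Field Fn] {d t : ℕ} (hdt : d ≤ t)
    (row : Fin t → Fn) (hrow : Function.Injective row) (a b : Fin d → Fn)
    (hab : ∀ k, polyEval a (row k) = polyEval b (row k)) : a = b := by
  rcases Nat.eq_zero_or_pos d with rfl | hd
  · funext k; exact k.elim0
  set p : Polynomial Fn := ∑ k : Fin d, Polynomial.C (a k - b k) * Polynomial.X ^ (k : ℕ) with hp
  have hdeg : p.natDegree < t := by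
    have : p.natDegree ≤ d - 1 := by
      apply Polynomial.natDegree_sum_le_of_forall_le
      intro k _
      exact (Polynomial.natDegree_C_mul_X_pow_le _ _).trans (by omega)
    omega
  have heval : ∀ k, p.eval (row k) = 0 := by
    intro k
    have := hab k
    simp only [polyEval] at this
    simp [hp, Polynomial.eval_finset_sum, sub_mul, Finset.sum_sub_distrib, this]
  have hp0 : p = 0 := by
    apply Polynomial.eq_zero_of_natDegree_lt_card_of_eval_eq_zero p hrow heval
    simpa using hdeg
  funext k
  have hc : p.coeff (k : ℕ) = a k - b k := by
    rw [hp, Polynomial.finset_sum_coeff]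
    rw [Finset.sum_eq_single k]
    · simp [sub_mul, Polynomial.coeff_X_pow]
    · intro j _ hjk
      have hj : (j : ℕ) ≠ (k : ℕ) := by simpa [Fin.val_inj] using hjk
      simp [sub_mul, Polynomial.coeff_X_pow, hj, Ne.symm hj]
    · simp
  rw [hp0] at hc
  simp only [Polynomial.coeff_zero] at hc
  exact sub_eq_zero.mp hc.symm

lemma prod_X_eq_monomial' {σ K : Type*} [CommSemiring K] [DecidableEq σ] (S : Finset σ) :
    ∏ v ∈ S, (X v : MvPolynomial σ K) = monomial (∑ v ∈ S, Finsupp.single v 1) 1 := by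
  induction S using Finset.induction with
  | empty => simp
  | insert _ _ h ih =>
      rw [Finset.prod_insert h, Finset.sum_insert h, ih, X, monomial_mul, one_mul]

lemma pderiv_prod_X {σ K : Type*} [CommSemiring K] [DecidableEq σ] (v : σ) (S : Finset σ) :
    pderiv v (∏ u ∈ S, (X u : MvPolynomial σ K)) =
      if v ∈ S then ∏ u ∈ S.erase v, X u else 0 := by
  rw [prod_X_eq_monomial', pderiv_monomial]
  have hval : (∑ u ∈ S, Finsupp.single u 1) v = if v ∈ S then 1 else 0 := by
    rw [Finsupp.finset_sum_apply]
    simp [Finsupp.single_apply]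
  by_cases hv : v ∈ S
  · have hsub : (∑ u ∈ S, Finsupp.single u 1) - Finsupp.single v 1
        = ∑ u ∈ S.erase v, Finsupp.single u (1:ℕ) := by
      rw [← Finset.add_sum_erase _ _ hv, add_tsub_cancel_left]
    rw [prod_X_eq_monomial']
    simp [hv, hval, hsub]
  · simp [hv, hval]

lemma foldr_pderiv_prod_X {σ K : Type*} [CommSemiring K] [DecidableEq σ]
    (L : List σ) (hL : L.Nodup) (S : Finset σ) :
    L.foldr (fun v g => pderiv v g) (∏ u ∈ S, (X u : MvPolynomial σ K)) =
      if L.toFinset ⊆ S then ∏ u ∈ S \ L.toFinset, X u else 0 := by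
  induction L with
  | nil => simp
  | cons v L ih =>
      obtain ⟨hv, hL'⟩ := List.nodup_cons.mp hL
      rw [List.foldr_cons, ih hL']
      by_cases hT : L.toFinset ⊆ S
      · rw [if_pos hT, pderiv_prod_X]
        have hvT : v ∉ L.toFinset := by simpa using hv
        by_cases hvS : v ∈ S
        · have h1 : v ∈ S \ L.toFinset := Finset.mem_sdiff.mpr ⟨hvS, hvT⟩
          rw [if_pos h1, if_pos (by simp [Finset.insert_subset_iff, hvS, hT]),
            List.toFinset_cons, Finset.sdiff_insert]
        · have h1 : v ∉ S \ L.toFinset := fun h => hvS (Finset.mem_sdiff.mp h).1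
          rw [if_neg h1, if_neg (by simp [Finset.insert_subset_iff, hvS])]
      · rw [if_neg hT, map_zero, if_neg (fun h => hT (Finset.Subset.trans (by simp) h))]

lemma foldr_pderiv_sum {σ K ι : Type*} [CommSemiring K]
    (L : List σ) (A : Finset ι) (f : ι → MvPolynomial σ K) :
    L.foldr (fun v g => pderiv v g) (∑ a ∈ A, f a)
      = ∑ a ∈ A, L.foldr (fun v g => pderiv v g) (f a) := by
  induction L with
  | nil => simp
  | cons v L ih => rw [List.foldr_cons, ih, map_sum]; simp

lemma pderivFinset_NW {Fn : Type*} [Field Fn] [Fintype Fn] [DecidableEq Fn]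
    {K : Type*} [Field K] (d : ℕ) (D : Finset (Fn × Fn)) :
    pderivFinset D (NW Fn K d) =
      ∑ a : Fin d → Fn,
        if D ⊆ Finset.image (fun i => (i, polyEval a i)) Finset.univ
        then ∏ v ∈ Finset.image (fun i => (i, polyEval a i)) Finset.univ \ D, X v
        else 0 := by
  unfold pderivFinset NW
  rw [foldr_pderiv_sum]
  apply Finset.sum_congr rfl
  intro a _
  have hinj : Function.Injective (fun i : Fn => (i, polyEval a i)) :=
    fun i j h => congrArg Prod.fst h
  rw [show (∏ i : Fn, (X (i, polyEval a i) : MvPolynomial (Fn × Fn) K))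
        = ∏ v ∈ Finset.image (fun i => (i, polyEval a i)) Finset.univ, X v from
      (Finset.prod_image (fun i _ j _ h => hinj h)).symm]
  rw [foldr_pderiv_prod_X _ D.nodup_toList, Finset.toList_toFinset]

/-- Let `ε ∈ (0,1/2)` and let `D = {x_{i_1 j_1}, …, x_{i_t j_t}}` be an admissible set
(distinct row indices, `εn ≤ t ≤ n`). There is at most one univariate polynomial `a` of
degree `< εn` over `F_n` with `a(i_k) = j_k` for all `k`; if such `a` exists, then
`∂NW_{n,ε}/∂D = ∏_{i ∉ {i_1,…,i_t}} x_{i,a(i)}`, and otherwise `∂NW_{n,ε}/∂D = 0`. -/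
theorem pderiv_NW_admissible
    (n : ℕ) (Fn : Type*) [Field Fn] [Fintype Fn] [DecidableEq Fn]
    (hcard : Fintype.card Fn = n)
    (K : Type*) [Field K]
    (ε : ℝ) (hε : ε ∈ Set.Ioo (0 : ℝ) (1 / 2))
    (t : ℕ) (hεt : ε * n ≤ (t : ℝ)) (htn : t ≤ n)
    (row col : Fin t → Fn) (hrow : Function.Injective row) :
    (∀ a b : Fin ⌈ε * n⌉₊ → Fn,
        (∀ k, polyEval a (row k) = col k) → (∀ k, polyEval b (row k) = col k) → a = b) ∧
    (∀ a : Fin ⌈ε * n⌉₊ → Fn, (∀ k, polyEval a (row k) = col k) →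
        pderivFinset (Finset.image (fun k => (row k, col k)) Finset.univ)
            (NW Fn K ⌈ε * n⌉₊)
          = ∏ i ∈ Finset.univ \ Finset.image row Finset.univ, X (i, polyEval a i)) ∧
    ((¬ ∃ a : Fin ⌈ε * n⌉₊ → Fn, ∀ k, polyEval a (row k) = col k) →
        pderivFinset (Finset.image (fun k => (row k, col k)) Finset.univ)
            (NW Fn K ⌈ε * n⌉₊) = 0) := by
  set d := ⌈ε * n⌉₊ with hd
  have hdt : d ≤ t := Nat.ceil_le.mpr hεt
  set D : Finset (Fn × Fn) := Finset.image (fun k => (row k, col k)) Finset.univ with hD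
  have huniq : ∀ a b : Fin d → Fn,
      (∀ k, polyEval a (row k) = col k) → (∀ k, polyEval b (row k) = col k) → a = b := by
    intro a b ha hb
    exact poly_unique hdt row hrow a b (fun k => by rw [ha k, hb k])
  have hmem : ∀ a : Fin d → Fn,
      (D ⊆ Finset.image (fun i => (i, polyEval a i)) Finset.univ) ↔
        ∀ k, polyEval a (row k) = col k := by
    intro a
    constructor
    · intro h k
      have := h (Finset.mem_image_of_mem _ (Finset.mem_univ k))
      obtain ⟨i, _, hi⟩ := Finset.mem_image.mp this
      obtain ⟨h1, h2⟩ := Prod.mk.injEq .. ▸ hi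
      rw [← h1]; exact h2
    · intro h v hv
      obtain ⟨k, _, hk⟩ := Finset.mem_image.mp hv
      rw [← hk]
      exact Finset.mem_image.mpr ⟨row k, Finset.mem_univ _, by rw [h k]⟩
  refine ⟨huniq, ?_, ?_⟩
  · intro a ha
    rw [pderivFinset_NW]
    have hiff : ∀ b : Fin d → Fn,
        (D ⊆ Finset.image (fun i => (i, polyEval b i)) Finset.univ) ↔ b = a := by
      intro b
      constructor
      · intro hb; exact huniq b a ((hmem b).mp hb) ha
      · rintro rfl; exact (hmem _).mpr ha
    rw [Finset.sum_congr rfl (fun b _ => if_congr (hiff b) rfl rfl),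
      Finset.sum_ite_eq' Finset.univ a, if_pos (Finset.mem_univ a)]
    have hinj : Function.Injective (fun i : Fn => (i, polyEval a i)) :=
      fun i j h => congrArg Prod.fst h
    have hDeq : D = Finset.image (fun i : Fn => (i, polyEval a i))
        (Finset.image row Finset.univ) := by
      rw [Finset.image_image, hD]
      apply Finset.image_congr
      intro k _
      simp [ha k]
    rw [hDeq, ← Finset.image_sdiff _ _ hinj,
      Finset.prod_image (fun i _ j _ h => hinj h)]
  · intro hne
    rw [pderivFinset_NW]
    apply Finset.sum_eq_zero
    intro b _
    rw [if_neg]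
    intro hb
    exact hne ⟨b, (hmem b).mp hb⟩
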